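/- In the free associative superalgebra 'f over ℂ(q) with odd generator θₘ, equipped with the bilinear form C as above, one has C(θₘ², θₘ²) = 0; hence θₘ² = 0 holds in the quotient f = 'f / Ker(C). -/

import Mathlib

open TensorProduct
open scoped TensorProduct

noncomputable section

/-- The base field `ℂ(q)`. -/
abbrev Kq : Type := RatFunc ℂ

/-- The indeterminate `q`. -/
def qq : Kq := RatFunc.X

set_option maxHeartbeats 1600000
set_option synthInstance.maxHeartbeats 400000

/-- In the free associative superalgebra `'f` over `ℂ(q)` on
generators `θᵢ (i ∈ I)` with `θₘ` odd (`aₘₘ = 0` for the odd isotropic root,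
so `⟨|θₘ|,|θₘ|⟩ = dₘaₘₘ = 0`), equipped with the bilinear form `C` determined
by `C(1,1) = 1`, `C(θₘ,θₘ) = 1`, `C(θᵢ,θⱼ) = 0` for `i ≠ j`,
`C(θᵢ,θᵢ) = (qᵢ − qᵢ⁻¹)⁻¹` for `i ≠ m`, and compatibility
`C(x, yz) = C(r(x), y⊗z)` with the twisted comultiplication `r`, one has
`C(θₘ², θₘ²) = 0`; hence `θₘ² = 0` in the quotient `f = 'f / Ker(C)`
(equivalently, `θₘ²` pairs to zero with every element on both sides). -/
theorem theta_m_squared_in_kernel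
    (I : Type) [DecidableEq I] (m : I)
    (pgen : I → ZMod 2) (hpm : pgen m = 1)
    (dsym : I → ℤ) (cartanA : I → I → ℤ) (hamm : cartanA m m = 0)
    -- parity and pairing of multidegrees
    (pardeg : (I →₀ ℕ) → ZMod 2)
    (hpar : ∀ ν : I →₀ ℕ, pardeg ν = ∑ i ∈ ν.support, (ν i : ZMod 2) * pgen i)
    (pairdeg : (I →₀ ℕ) → (I →₀ ℕ) → ℤ)
    (hpair : ∀ ν μ : I →₀ ℕ, pairdeg ν μ =
      ∑ i ∈ ν.support, ∑ j ∈ μ.support, dsym i * cartanA i j * (ν i : ℤ) * (μ j : ℤ))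
    -- the multidegree grading of the free algebra
    (grF : (I →₀ ℕ) → Submodule Kq (FreeAlgebra Kq I))
    (hgr_one : (1 : FreeAlgebra Kq I) ∈ grF 0)
    (hgr_gen : ∀ i, FreeAlgebra.ι Kq i ∈ grF (Finsupp.single i 1))
    (hgr_mul : ∀ (ν μ : I →₀ ℕ) (x y : FreeAlgebra Kq I),
      x ∈ grF ν → y ∈ grF μ → x * y ∈ grF (ν + μ))
    (hgr_span : ∀ ν : I →₀ ℕ, grF ν ≤ Submodule.span Kq
      {w : FreeAlgebra Kq I | ∃ L : List I,
        w = (L.map (FreeAlgebra.ι Kq)).prod ∧ ∀ i, L.count i = ν i})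
    -- the twisted multiplication on 'f ⊗ 'f
    (tm : FreeAlgebra Kq I ⊗[Kq] FreeAlgebra Kq I →ₗ[Kq]
      FreeAlgebra Kq I ⊗[Kq] FreeAlgebra Kq I →ₗ[Kq]
      FreeAlgebra Kq I ⊗[Kq] FreeAlgebra Kq I)
    (htm_char : ∀ (ν₁ ν₂ μ₁ μ₂ : I →₀ ℕ) (x₁ x₂ y₁ y₂ : FreeAlgebra Kq I),
      x₁ ∈ grF ν₁ → x₂ ∈ grF ν₂ → y₁ ∈ grF μ₁ → y₂ ∈ grF μ₂ →
      tm (x₁ ⊗ₜ[Kq] x₂) (y₁ ⊗ₜ[Kq] y₂) =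
        (((-1 : Kq) ^ ((pardeg ν₂).val * (pardeg μ₁).val)) * qq ^ (pairdeg ν₂ μ₁)) •
          ((x₁ * y₁) ⊗ₜ[Kq] (x₂ * y₂)))
    -- the twisted comultiplication r
    (rc : FreeAlgebra Kq I →ₗ[Kq] FreeAlgebra Kq I ⊗[Kq] FreeAlgebra Kq I)
    (hrc_one : rc 1 = (1 : FreeAlgebra Kq I) ⊗ₜ[Kq] (1 : FreeAlgebra Kq I))
    (hrc_gen : ∀ i, rc (FreeAlgebra.ι Kq i) =
      FreeAlgebra.ι Kq i ⊗ₜ[Kq] (1 : FreeAlgebra Kq I) +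
      (1 : FreeAlgebra Kq I) ⊗ₜ[Kq] FreeAlgebra.ι Kq i)
    (hrc_mul : ∀ x y : FreeAlgebra Kq I, rc (x * y) = tm (rc x) (rc y))
    -- the bilinear form C and its extension C2 to 'f ⊗ 'f
    (C : FreeAlgebra Kq I →ₗ[Kq] FreeAlgebra Kq I →ₗ[Kq] Kq)
    (C2 : FreeAlgebra Kq I ⊗[Kq] FreeAlgebra Kq I →ₗ[Kq]
      FreeAlgebra Kq I ⊗[Kq] FreeAlgebra Kq I →ₗ[Kq] Kq)
    (hC2_char : ∀ (ν μ : I →₀ ℕ) (x₁ x₂ y₁ y₂ : FreeAlgebra Kq I),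
      x₂ ∈ grF ν → y₁ ∈ grF μ →
      C2 (x₁ ⊗ₜ[Kq] x₂) (y₁ ⊗ₜ[Kq] y₂) =
        ((-1 : Kq) ^ ((pardeg ν).val * (pardeg μ).val)) * (C x₁ y₁ * C x₂ y₂))
    (hC_one : C 1 1 = 1)
    (hC_gen : ∀ i j : I, C (FreeAlgebra.ι Kq i) (FreeAlgebra.ι Kq j) =
      if i = j then (if i = m then 1 else (qq ^ dsym i - (qq ^ dsym i)⁻¹)⁻¹) else 0)
    (hC_right : ∀ x y z : FreeAlgebra Kq I, C x (y * z) = C2 (rc x) (y ⊗ₜ[Kq] z))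
    (hC_left : ∀ x y z : FreeAlgebra Kq I, C (x * y) z = C2 (x ⊗ₜ[Kq] y) (rc z))
    (hC_deg : ∀ (ν μ : I →₀ ℕ), ν ≠ μ →
      ∀ x ∈ grF ν, ∀ y ∈ grF μ, C x y = 0) :
    C (FreeAlgebra.ι Kq m * FreeAlgebra.ι Kq m)
        (FreeAlgebra.ι Kq m * FreeAlgebra.ι Kq m) = 0 ∧
    (∀ y : FreeAlgebra Kq I,
      C (FreeAlgebra.ι Kq m * FreeAlgebra.ι Kq m) y = 0) ∧
    (∀ y : FreeAlgebra Kq I,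
      C y (FreeAlgebra.ι Kq m * FreeAlgebra.ι Kq m) = 0) := by
  classical
  set θ : FreeAlgebra Kq I := FreeAlgebra.ι Kq m with hθdef
  set σ : I →₀ ℕ := Finsupp.single m 1 with hσdef
  have hθσ : θ ∈ grF σ := hgr_gen m
  have hone : (1 : FreeAlgebra Kq I) ∈ grF 0 := hgr_one
  have hp0 : pardeg 0 = 0 := by simp [hpar]
  have hpσ : pardeg σ = 1 := by
    rw [hpar, hσdef, Finsupp.support_single_ne_zero m one_ne_zero]
    simp [hpm]
  have hq0l : ∀ μ, pairdeg 0 μ = 0 := by intro μ; simp [hpair]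
  have hq0r : ∀ μ, pairdeg μ 0 = 0 := by intro μ; simp [hpair]
  have hqσσ : pairdeg σ σ = 0 := by
    rw [hpair, hσdef, Finsupp.support_single_ne_zero m one_ne_zero]
    simp [hamm]
  have hσne : (0 : I →₀ ℕ) ≠ σ := by
    rw [hσdef]
    exact fun h => one_ne_zero ((Finsupp.single_eq_zero).mp h.symm)
  have hσ2 : σ + σ = Finsupp.single m 2 := by
    rw [hσdef, ← Finsupp.single_add]
  -- r(θ²) = θ² ⊗ 1 + 1 ⊗ θ²
  have hrcθ2 : rc (θ * θ) = (θ * θ) ⊗ₜ[Kq] 1 + 1 ⊗ₜ[Kq] (θ * θ) := by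
    rw [hrc_mul, hrc_gen]
    simp only [map_add, LinearMap.add_apply]
    rw [htm_char σ 0 σ 0 θ 1 θ 1 hθσ hone hθσ hone,
        htm_char σ 0 0 σ θ 1 1 θ hθσ hone hone hθσ,
        htm_char 0 σ σ 0 1 θ θ 1 hone hθσ hθσ hone,
        htm_char 0 σ 0 σ 1 θ 1 θ hone hθσ hone hθσ]
    simp only [hp0, hpσ, hq0l, hq0r, hqσσ, ZMod.val_zero, ZMod.val_one,
      Nat.mul_zero, Nat.zero_mul, Nat.mul_one, Nat.one_mul, pow_zero, pow_one,
      zpow_zero, mul_one, one_mul, one_smul, neg_smul, neg_mul]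
    have hneg : (-1 : Kq) • (θ ⊗ₜ[Kq] θ) + θ ⊗ₜ[Kq] θ = 0 := by
      nth_rewrite 2 [← one_smul Kq (θ ⊗ₜ[Kq] θ)]
      rw [← add_smul, neg_add_cancel, zero_smul]
    have e : ∀ a b x t : (FreeAlgebra Kq I ⊗[Kq] FreeAlgebra Kq I), x + t = 0 → a + x + (t + b) = a + b := by
      intro a b x t h; rw [add_assoc, ← add_assoc x, h, zero_add]
    exact e _ _ _ _ hneg
  have hC1θ : C 1 θ = 0 := hC_deg 0 σ hσne 1 hone θ hθσ
  have hθ2mem : θ * θ ∈ grF (Finsupp.single m 2) := by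
    rw [← hσ2]; exact hgr_mul σ σ θ θ hθσ hθσ
  -- the key vanishing
  have hkey : C (θ * θ) (θ * θ) = 0 := by
    rw [hC_right, hrcθ2, map_add, LinearMap.add_apply]
    rw [hC2_char 0 σ (θ * θ) 1 θ θ hone hθσ,
        hC2_char (σ + σ) σ 1 (θ * θ) θ θ (hgr_mul σ σ θ θ hθσ hθσ) hθσ]
    rw [hC1θ]
    ring
  -- every word lives in some graded piece matching its letter counts
  have hword : ∀ L : List I, ∃ ν : I →₀ ℕ,
      ((L.map (FreeAlgebra.ι Kq)).prod ∈ grF ν) ∧ ∀ i, ν i = L.count i := by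
    intro L
    induction L with
    | nil => exact ⟨0, by simpa using hgr_one, by simp⟩
    | cons a L ih =>
      obtain ⟨ν, hmem, hcount⟩ := ih
      refine ⟨Finsupp.single a 1 + ν, ?_, ?_⟩
      · simpa using hgr_mul _ _ _ _ (hgr_gen a) hmem
      · intro i
        simp only [Finsupp.add_apply, Finsupp.single_apply, hcount, List.count_cons]
        rcases eq_or_ne a i with h | h
        · subst h; simp; omega
        · simp [h, Ne.symm h]
  -- if the counts are those of θₘ², the word is θₘθₘ
  have hLmm : ∀ L : List I, (∀ i, (Finsupp.single m 2 : I →₀ ℕ) i = L.count i) →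
      L = [m, m] := by
    intro L hc
    have hall : ∀ b ∈ L, b = m := by
      intro b hb
      by_contra hbm
      have h0 : L.count b = 0 := by
        have := hc b
        rw [Finsupp.single_apply, if_neg (Ne.symm hbm)] at this
        omega
      have := List.count_pos_iff.mpr hb
      omega
    have hlen : L.length = 2 := by
      have h2 : L.count m = 2 := by
        have := hc m
        rw [Finsupp.single_apply, if_pos rfl] at this
        omega
      have := List.count_eq_length.mpr (fun b hb => (hall b hb).symm)
      omega
    have : L = List.replicate 2 m :=
      List.eq_replicate_iff.mpr ⟨hlen, hall⟩
    simpa using this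
  -- pairing a word against θₘ² on either side
  have hw_left : ∀ L : List I,
      C (θ * θ) ((L.map (FreeAlgebra.ι Kq)).prod) = 0 := by
    intro L
    obtain ⟨ν, hmem, hcount⟩ := hword L
    by_cases h : ν = Finsupp.single m 2
    · have hL : L = [m, m] := hLmm L (fun i => by rw [← h]; exact hcount i)
      rw [hL]
      simpa using hkey
    · exact hC_deg (Finsupp.single m 2) ν (fun he => h he.symm) _ hθ2mem _ hmem
  have hw_right : ∀ L : List I,
      C ((L.map (FreeAlgebra.ι Kq)).prod) (θ * θ) = 0 := by
    intro L
    obtain ⟨ν, hmem, hcount⟩ := hword L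
    by_cases h : ν = Finsupp.single m 2
    · have hL : L = [m, m] := hLmm L (fun i => by rw [← h]; exact hcount i)
      rw [hL]
      simpa using hkey
    · exact hC_deg ν (Finsupp.single m 2) h _ hmem _ hθ2mem
  -- words span the free algebra
  have hspan : ∀ y : FreeAlgebra Kq I, y ∈ Submodule.span Kq
      {w : FreeAlgebra Kq I | ∃ L : List I, w = (L.map (FreeAlgebra.ι Kq)).prod} := by
    have hmulclosed : Submodule.span Kq
        {w : FreeAlgebra Kq I | ∃ L : List I, w = (L.map (FreeAlgebra.ι Kq)).prod} *
        Submodule.span Kq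
        {w : FreeAlgebra Kq I | ∃ L : List I, w = (L.map (FreeAlgebra.ι Kq)).prod} ≤
        Submodule.span Kq
        {w : FreeAlgebra Kq I | ∃ L : List I, w = (L.map (FreeAlgebra.ι Kq)).prod} := by
      rw [Submodule.span_mul_span]
      apply Submodule.span_le.mpr
      rintro z hz
      obtain ⟨a, ⟨L1, rfl⟩, b, ⟨L2, rfl⟩, rfl⟩ := hz
      exact Submodule.subset_span ⟨L1 ++ L2, by simp⟩
    intro y
    induction y using FreeAlgebra.induction with
    | grade0 r =>
        rw [Algebra.algebraMap_eq_smul_one]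
        exact Submodule.smul_mem _ r (Submodule.subset_span ⟨[], by simp⟩)
    | grade1 i => exact Submodule.subset_span ⟨[i], by simp⟩
    | mul a b ha hb => exact hmulclosed (Submodule.mul_mem_mul ha hb)
    | add a b ha hb => exact Submodule.add_mem _ ha hb
  refine ⟨hkey, ?_, ?_⟩
  · intro y
    refine Submodule.span_induction (p := fun z _ => C (θ * θ) z = 0) ?_ ?_ ?_ ?_ (hspan y)
    · rintro w ⟨L, rfl⟩
      exact hw_left L
    · simp
    · intro a b _ _ ha hb
      rw [map_add, ha, hb, add_zero]
    · intro c a _ ha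
      rw [map_smul, ha, smul_zero]
  · intro y
    refine Submodule.span_induction (p := fun z _ => C z (θ * θ) = 0) ?_ ?_ ?_ ?_ (hspan y)
    · rintro w ⟨L, rfl⟩
      exact hw_right L
    · simp
    · intro a b _ _ ha hb
      rw [map_add, LinearMap.add_apply, ha, hb, add_zero]
    · intro c a _ ha
      rw [map_smul, LinearMap.smul_apply, ha, smul_zero]
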